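/- arXiv:math/0211424 — 4 statements merged into one kernel-verified Lean document; each statement's English description precedes it below -/
import Mathlib

section
/- For λ₁, λ₂, λ₃ ∈ [0, π], the identity matrix I belongs to the set product C(λ₁)C(λ₂)C(λ₃) in SU(2) if and only if |λ₁ − λ₂| ≤ λ₃ ≤ min(λ₁ + λ₂, 2π − (λ₁ + λ₂)). -/
open Matrix Complex Pointwise

/-- `SU(2)`: the subgroup of the unitary group `U(2)` (2×2 complex unitary matrices)
consisting of the matrices of determinant 1. -/
noncomputable def SU2 : Subgroup (Matrix.unitaryGroup (Fin 2) ℂ) :=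
  MonoidHom.ker (Matrix.detMonoidHom.comp (Submonoid.subtype _))

theorem mem_SU2_iff (A : Matrix.unitaryGroup (Fin 2) ℂ) :
    A ∈ SU2 ↔ Matrix.det (A : Matrix (Fin 2) (Fin 2) ℂ) = 1 := Iff.rfl

/-- The diagonal matrix `diag(e^{iλ}, e^{-iλ})` as an element of `SU(2)`. -/
noncomputable def su2diag (l : ℝ) : SU2 :=
  ⟨⟨Matrix.diagonal ![Complex.exp (l * Complex.I), Complex.exp (-(l * Complex.I))], by
    rw [Matrix.mem_unitaryGroup_iff]
    rw [Matrix.star_eq_conjTranspose, Matrix.diagonal_conjTranspose,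
      Matrix.diagonal_mul_diagonal]
    have h : (fun i => ![Complex.exp (l * Complex.I), Complex.exp (-(l * Complex.I))] i *
        star ![Complex.exp (l * Complex.I), Complex.exp (-(l * Complex.I))] i)
        = (1 : Fin 2 → ℂ) := by
      funext i
      fin_cases i <;>
        simp [Pi.star_apply, ← Complex.exp_conj, ← Complex.exp_add]
    rw [h]; exact Matrix.diagonal_one⟩, by
    rw [mem_SU2_iff]
    rw [Matrix.det_diagonal]
    simp [Fin.prod_univ_two, ← Complex.exp_add]⟩

/-- The conjugacy class `C(λ)` of `diag(e^{iλ}, e^{-iλ})` in `SU(2)`. -/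
noncomputable def conjClass (l : ℝ) : Set SU2 :=
  { g | ∃ h : SU2, h * su2diag l * h⁻¹ = g }

/-- The pointwise set product `C(λ₁)⋯C(λ_m)` of the conjugacy classes
`C(λ₁), …, C(λ_m)` in `SU(2)`. -/
noncomputable def classProd {m : ℕ} (l : Fin m → ℝ) : Set SU2 :=
  (List.ofFn fun i => conjClass (l i)).prod

/-! ### Auxiliary machinery -/

noncomputable def toMat (g : SU2) : Matrix (Fin 2) (Fin 2) ℂ :=
  ((g : Matrix.unitaryGroup (Fin 2) ℂ) : Matrix (Fin 2) (Fin 2) ℂ)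

lemma toMat_mul (g h : SU2) : toMat (g * h) = toMat g * toMat h := rfl
lemma toMat_one : toMat 1 = 1 := rfl
lemma toMat_inv (g : SU2) : toMat g⁻¹ = star (toMat g) := rfl
lemma det_toMat (g : SU2) : Matrix.det (toMat g) = 1 := g.2
lemma toMat_inj {g h : SU2} (e : toMat g = toMat h) : g = h := by
  apply Subtype.ext; apply Subtype.ext; exact e

lemma star_mul_self_toMat (g : SU2) : star (toMat g) * toMat g = 1 := by
  have := g.1.2
  rw [Matrix.mem_unitaryGroup_iff'] at this
  exact this

lemma star_toMat_eq_adjugate (g : SU2) :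
    star (toMat g) = Matrix.adjugate (toMat g) := by
  have h1 := star_mul_self_toMat g
  have h2 : toMat g * Matrix.adjugate (toMat g) = 1 := by
    rw [Matrix.mul_adjugate, det_toMat, one_smul]
  calc star (toMat g) = star (toMat g) * (toMat g * Matrix.adjugate (toMat g)) := by
        rw [h2, mul_one]
    _ = (star (toMat g) * toMat g) * Matrix.adjugate (toMat g) := by rw [mul_assoc]
    _ = Matrix.adjugate (toMat g) := by rw [h1, one_mul]

lemma toMat_inv_eq_adjugate (g : SU2) : toMat g⁻¹ = Matrix.adjugate (toMat g) := by
  rw [toMat_inv, star_toMat_eq_adjugate]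

lemma toMat_apply_11 (g : SU2) : toMat g 1 1 = (starRingEnd ℂ) (toMat g 0 0) := by
  have := congrFun (congrFun (star_toMat_eq_adjugate g) 0) 0
  simpa [Matrix.adjugate_fin_two] using this.symm

lemma toMat_apply_10 (g : SU2) : toMat g 1 0 = -(starRingEnd ℂ) (toMat g 0 1) := by
  have := congrFun (congrFun (star_toMat_eq_adjugate g) 1) 0
  simp [Matrix.adjugate_fin_two] at this
  rw [this]; ring

lemma normSq_toMat (g : SU2) :
    Complex.normSq (toMat g 0 0) + Complex.normSq (toMat g 0 1) = 1 := by
  have h := det_toMat g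
  rw [Matrix.det_fin_two, toMat_apply_11, toMat_apply_10] at h
  have : ((Complex.normSq (toMat g 0 0) + Complex.normSq (toMat g 0 1) : ℝ) : ℂ)
      = ((1 : ℝ) : ℂ) := by
    push_cast
    rw [← Complex.mul_conj, ← Complex.mul_conj]
    linear_combination h
  exact_mod_cast this

noncomputable def mkSU2 (a b : ℂ) (h : Complex.normSq a + Complex.normSq b = 1) : SU2 :=
  ⟨⟨!![a, b; -(starRingEnd ℂ) b, (starRingEnd ℂ) a], by
    rw [Matrix.mem_unitaryGroup_iff]
    ext i j
    fin_cases i <;> fin_cases j <;>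
      simp [Matrix.mul_apply, Fin.sum_univ_two, Matrix.one_apply, Complex.mul_conj,
        mul_comm ((starRingEnd ℂ) b) b, mul_comm ((starRingEnd ℂ) a) a]
    all_goals (try ring)
    all_goals norm_cast <;> linarith [h]⟩, by
    show Matrix.det (!![a, b; -(starRingEnd ℂ) b, (starRingEnd ℂ) a]) = 1
    rw [Matrix.det_fin_two_of]
    have hc : ((Complex.normSq a + Complex.normSq b : ℝ) : ℂ) = 1 := by rw [h]; norm_num
    push_cast at hc
    rw [← Complex.mul_conj, ← Complex.mul_conj] at hc
    linear_combination hc⟩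

lemma toMat_mkSU2 (a b : ℂ) (h : Complex.normSq a + Complex.normSq b = 1) :
    toMat (mkSU2 a b h) = !![a, b; -(starRingEnd ℂ) b, (starRingEnd ℂ) a] := rfl

lemma toMat_su2diag (l : ℝ) : toMat (su2diag l) =
    Matrix.diagonal ![Complex.exp (l * Complex.I), Complex.exp (-(l * Complex.I))] := rfl

lemma two_cos_eq (x : ℝ) :
    (2 : ℂ) * (Real.cos x : ℂ) = Complex.exp (x * Complex.I) + Complex.exp (-(x * Complex.I)) := by
  rw [Complex.ofReal_cos, Complex.two_cos]
  ring_nf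

lemma trace_su2diag (l : ℝ) :
    Matrix.trace (toMat (su2diag l)) = 2 * (Real.cos l : ℂ) := by
  rw [toMat_su2diag, Matrix.trace_fin_two, two_cos_eq]
  simp

lemma trace_toMat_conj (u x : SU2) :
    Matrix.trace (toMat (u * x * u⁻¹)) = Matrix.trace (toMat x) := by
  rw [toMat_mul, toMat_mul, Matrix.trace_mul_comm, ← Matrix.mul_assoc, ← toMat_mul,
    inv_mul_cancel, toMat_one, Matrix.one_mul]

lemma trace_formula (l1 l2 : ℝ) (k : SU2) :
    Matrix.trace (toMat (su2diag l1 * k * su2diag l2 * k⁻¹)) =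
      (Complex.normSq (toMat k 0 0) : ℂ) * (2 * (Real.cos (l1 + l2) : ℂ))
      + (Complex.normSq (toMat k 0 1) : ℂ) * (2 * (Real.cos (l1 - l2) : ℂ)) := by
  have c1 : (2 : ℂ) * (Real.cos (l1 + l2) : ℂ)
      = Complex.exp (l1 * Complex.I) * Complex.exp (l2 * Complex.I)
        + Complex.exp (-(l1 * Complex.I)) * Complex.exp (-(l2 * Complex.I)) := by
    rw [two_cos_eq, ← Complex.exp_add, ← Complex.exp_add]
    push_cast; ring_nf
  have c2 : (2 : ℂ) * (Real.cos (l1 - l2) : ℂ)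
      = Complex.exp (l1 * Complex.I) * Complex.exp (-(l2 * Complex.I))
        + Complex.exp (-(l1 * Complex.I)) * Complex.exp (l2 * Complex.I) := by
    rw [two_cos_eq, ← Complex.exp_add, ← Complex.exp_add]
    push_cast; ring_nf
  have na : (Complex.normSq (toMat k 0 0) : ℂ)
      = toMat k 0 0 * (starRingEnd ℂ) (toMat k 0 0) := (Complex.mul_conj _).symm
  have nb : (Complex.normSq (toMat k 0 1) : ℂ)
      = toMat k 0 1 * (starRingEnd ℂ) (toMat k 0 1) := (Complex.mul_conj _).symm
  rw [c1, c2, na, nb]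
  rw [toMat_mul, toMat_mul, toMat_mul, toMat_inv_eq_adjugate, Matrix.adjugate_fin_two,
    toMat_apply_11 k, toMat_apply_10 k, toMat_su2diag, toMat_su2diag, Matrix.trace_fin_two]
  simp [Matrix.mul_apply, Fin.sum_univ_two, Matrix.diagonal]
  rw [toMat_apply_11 k, toMat_apply_10 k]
  ring

lemma mem_conjClass_self (l : ℝ) : su2diag l ∈ conjClass l :=
  ⟨1, by group⟩

lemma trace_of_mem_conjClass {l : ℝ} {g : SU2} (hg : g ∈ conjClass l) :
    Matrix.trace (toMat g) = 2 * (Real.cos l : ℂ) := by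
  obtain ⟨h, rfl⟩ := hg
  rw [trace_toMat_conj, trace_su2diag]

lemma mem_conjClass_of_trace {l : ℝ} (hl : l ∈ Set.Icc 0 Real.pi) {g : SU2}
    (ht : Matrix.trace (toMat g) = 2 * (Real.cos l : ℂ)) : g ∈ conjClass l := by
  obtain ⟨hl0, hlpi⟩ := hl
  set a := toMat g 0 0 with ha_def
  set b := toMat g 0 1 with hb_def
  have htr : a + (starRingEnd ℂ) a = 2 * (Real.cos l : ℂ) := by
    rw [← ht, Matrix.trace_fin_two, toMat_apply_11]
  have hre : a.re = Real.cos l := by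
    have h2 : ((2 * a.re : ℝ) : ℂ) = ((2 * Real.cos l : ℝ) : ℂ) := by
      rw [← Complex.add_conj, htr]
      push_cast
      ring
    have := Complex.ofReal_inj.mp h2
    linarith
  have hnorm : Complex.normSq a + Complex.normSq b = 1 := normSq_toMat g
  have hsin0 : 0 ≤ Real.sin l := Real.sin_nonneg_of_nonneg_of_le_pi hl0 hlpi
  have hpyth : Real.sin l ^ 2 + Real.cos l ^ 2 = 1 := Real.sin_sq_add_cos_sq l
  have hnsq : Complex.normSq a = a.re ^ 2 + a.im ^ 2 := by
    rw [Complex.normSq_apply]; ring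
  set s := a.im with hs_def
  have hbb : Complex.normSq b = Real.sin l ^ 2 - s ^ 2 := by
    rw [hnsq, hre] at hnorm; nlinarith
  have heta : toMat g = !![a, b; -(starRingEnd ℂ) b, (starRingEnd ℂ) a] := by
    have e10 := toMat_apply_10 g
    have e11 := toMat_apply_11 g
    ext i j
    fin_cases i <;> fin_cases j <;> simp [← ha_def, ← hb_def, e10, e11]
  have ha : a = (Real.cos l : ℂ) + (s : ℂ) * Complex.I := by
    rw [← hre, hs_def]
    exact (Complex.re_add_im a).symm
  by_cases hmu : Real.sin l - s = 0
  · -- b = 0 and a = exp(l*I)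
    have hb0 : b = 0 := by
      have : Complex.normSq b = 0 := by rw [hbb]; nlinarith
      exact Complex.normSq_eq_zero.mp this
    have haexp : a = Complex.exp (l * Complex.I) := by
      rw [Complex.exp_mul_I, ha, ← Complex.ofReal_cos, ← Complex.ofReal_sin]
      have : s = Real.sin l := by linarith
      rw [this]
    have hg' : g = su2diag l := by
      apply toMat_inj
      rw [heta, toMat_su2diag, hb0, haexp]
      have hconj : (starRingEnd ℂ) (Complex.exp (l * Complex.I))
          = Complex.exp (-(l * Complex.I)) := by
        rw [← Complex.exp_conj]
        congr 1
        simp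
      ext i j
      fin_cases i <;> fin_cases j <;> simp [Matrix.diagonal, hconj]
    rw [hg']
    exact mem_conjClass_self l
  · -- nondegenerate case
    set μ := Real.sin l - s with hmu_def
    have hs2 : s ^ 2 ≤ Real.sin l ^ 2 := by nlinarith [Complex.normSq_nonneg b]
    have hsinpos : 0 < Real.sin l := by
      rcases lt_or_eq_of_le hsin0 with h | h
      · exact h
      · exfalso; apply hmu; nlinarith
    have hslt : s < Real.sin l := by
      rcases lt_or_eq_of_le (show s ≤ Real.sin l by nlinarith) with h | h
      · exact h
      · exact absurd (by linarith : Real.sin l - s = 0) hmu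
    have hmupos : 0 < μ := by simp [hmu_def]; linarith
    set N := 2 * Real.sin l * μ with hN_def
    have hNpos : 0 < N := by positivity
    set r := Real.sqrt N with hr_def
    have hrpos : 0 < r := Real.sqrt_pos.mpr hNpos
    have hr2 : r ^ 2 = N := Real.sq_sqrt hNpos.le
    have hrne : (r : ℂ) ≠ 0 := by exact_mod_cast hrpos.ne'
    have hkey : Complex.normSq ((b : ℂ) / (r : ℂ))
        + Complex.normSq ((μ : ℂ) * Complex.I / (r : ℂ)) = 1 := by
      rw [Complex.normSq_div, Complex.normSq_div]
      simp only [Complex.normSq_mul, Complex.normSq_I, Complex.normSq_ofReal]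
      rw [hbb]
      have : r * r = N := by nlinarith
      rw [this]
      field_simp
      rw [hN_def, hmu_def]
      ring
    refine ⟨mkSU2 (b / r) ((μ : ℂ) * Complex.I / r) hkey, ?_⟩
    rw [mul_inv_eq_iff_eq_mul]
    apply toMat_inj
    rw [toMat_mul, toMat_mul, toMat_mkSU2, toMat_su2diag, heta]
    have hbc : b * (starRingEnd ℂ) b = ((Real.sin l ^ 2 - s ^ 2 : ℝ) : ℂ) := by
      rw [Complex.mul_conj, hbb]
    have hmuC : (μ : ℂ) = (Real.sin l : ℂ) - (s : ℂ) := by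
      rw [hmu_def]; push_cast; ring
    have hexp : Complex.exp (l * Complex.I)
        = (Real.cos l : ℂ) + (Real.sin l : ℂ) * Complex.I := by
      rw [Complex.exp_mul_I, ← Complex.ofReal_cos, ← Complex.ofReal_sin]
    have hexp' : Complex.exp (-(l * Complex.I))
        = (Real.cos l : ℂ) - (Real.sin l : ℂ) * Complex.I := by
      have h2c := two_cos_eq l
      rw [hexp] at h2c
      linear_combination (-1 : ℂ) * h2c
    have hconjmu : (starRingEnd ℂ) ((μ : ℂ) * Complex.I / (r : ℂ))
        = -((μ : ℂ) * Complex.I / (r : ℂ)) := by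
      simp [map_div₀, Complex.conj_ofReal]
      ring
    have hconjbr : (starRingEnd ℂ) (b / (r : ℂ)) = (starRingEnd ℂ) b / (r : ℂ) := by
      simp [map_div₀, Complex.conj_ofReal]
    have hconja : (starRingEnd ℂ) ((Real.cos l : ℂ) + (s : ℂ) * Complex.I)
        = (Real.cos l : ℂ) - (s : ℂ) * Complex.I := by
      simp [Complex.ext_iff]
    have hsinC : (Real.sin l : ℂ) = (μ : ℂ) + (s : ℂ) := by
      rw [hmu_def]; push_cast; ring
    have hbc2 : b * (starRingEnd ℂ) b = (μ : ℂ) ^ 2 + 2 * (μ : ℂ) * (s : ℂ) := by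
      rw [Complex.mul_conj, hbb, hmu_def]; push_cast; ring
    have hD : (Matrix.diagonal ![Complex.exp (l * Complex.I), Complex.exp (-(l * Complex.I))])
        = !![(Real.cos l : ℂ) + (Real.sin l : ℂ) * Complex.I, 0;
             0, (Real.cos l : ℂ) - (Real.sin l : ℂ) * Complex.I] := by
      ext i j
      fin_cases i <;> fin_cases j <;> simp [Matrix.diagonal, hexp, hexp']
    rw [hD, ha, hconjmu, hconjbr, hconja, hsinC, Matrix.mul_fin_two, Matrix.mul_fin_two]
    ext i j
    fin_cases i <;> fin_cases j <;>
      simp only [Matrix.cons_val', Matrix.cons_val_zero, Matrix.cons_val_one,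
        Matrix.head_cons, Matrix.head_fin_const, Matrix.empty_val',
        Matrix.cons_val_fin_one, Matrix.of_apply, Fin.isValue, Fin.zero_eta, Fin.mk_one]
    · ring
    · linear_combination ((-1 : ℂ)/(r : ℂ)) * hbc2
        + ((-((μ : ℂ)^2) - 2*(μ : ℂ)*(s : ℂ))/(r : ℂ)) * Complex.I_sq
    · linear_combination ((1 : ℂ)/(r : ℂ)) * hbc2
        + ((((μ : ℂ)^2) + 2*(μ : ℂ)*(s : ℂ))/(r : ℂ)) * Complex.I_sq
    · ring

lemma su2diag_inv (l : ℝ) : (su2diag l)⁻¹ = su2diag (-l) := by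
  rw [eq_comm, eq_inv_iff_mul_eq_one]
  apply toMat_inj
  rw [toMat_mul, toMat_su2diag, toMat_su2diag, toMat_one, Matrix.diagonal_mul_diagonal]
  have : (fun i => ![Complex.exp ((-l : ℝ) * Complex.I), Complex.exp (-((-l : ℝ) * Complex.I))] i
      * ![Complex.exp (l * Complex.I), Complex.exp (-(l * Complex.I))] i) = (1 : Fin 2 → ℂ) := by
    funext i
    fin_cases i <;> simp [← Complex.exp_add] <;> push_cast <;> ring_nf
  rw [this]
  exact Matrix.diagonal_one

noncomputable def weyl : SU2 := mkSU2 0 1 (by simp)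

lemma weyl_conj (l : ℝ) : weyl * su2diag l * weyl⁻¹ = (su2diag l)⁻¹ := by
  rw [su2diag_inv, mul_inv_eq_iff_eq_mul]
  apply toMat_inj
  rw [toMat_mul, toMat_mul, toMat_su2diag, toMat_su2diag]
  show !![(0:ℂ), 1; -(starRingEnd ℂ) 1, (starRingEnd ℂ) 0] * _
      = _ * !![(0:ℂ), 1; -(starRingEnd ℂ) 1, (starRingEnd ℂ) 0]
  ext i j
  fin_cases i <;> fin_cases j <;>
    simp [Matrix.mul_apply, Fin.sum_univ_two, Matrix.diagonal] <;>
    push_cast <;> ring_nf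

lemma inv_mem_conjClass {l : ℝ} {g : SU2} (hg : g ∈ conjClass l) : g⁻¹ ∈ conjClass l := by
  obtain ⟨h, rfl⟩ := hg
  refine ⟨h * weyl, ?_⟩
  have := weyl_conj l
  calc h * weyl * su2diag l * (h * weyl)⁻¹ = h * (weyl * su2diag l * weyl⁻¹) * h⁻¹ := by group
    _ = h * (su2diag l)⁻¹ * h⁻¹ := by rw [this]
    _ = (h * su2diag l * h⁻¹)⁻¹ := by group

lemma cos_min_eq (l1 l2 : ℝ) (h1 : l1 ∈ Set.Icc 0 Real.pi) (h2 : l2 ∈ Set.Icc 0 Real.pi) :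
    Real.cos (min (l1 + l2) (2 * Real.pi - (l1 + l2))) = Real.cos (l1 + l2) := by
  rcases min_cases (l1 + l2) (2 * Real.pi - (l1 + l2)) with ⟨he, _⟩ | ⟨he, _⟩
  · rw [he]
  · rw [he, show 2 * Real.pi - (l1 + l2) = -(l1 + l2) + 2 * Real.pi by ring,
      Real.cos_add_two_pi, Real.cos_neg]

lemma min_mem_Icc (l1 l2 : ℝ) (h1 : l1 ∈ Set.Icc 0 Real.pi) (h2 : l2 ∈ Set.Icc 0 Real.pi) :
    min (l1 + l2) (2 * Real.pi - (l1 + l2)) ∈ Set.Icc 0 Real.pi := by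
  obtain ⟨h10, h1p⟩ := h1; obtain ⟨h20, h2p⟩ := h2
  constructor
  · apply le_min <;> [linarith; linarith]
  · rcases min_cases (l1 + l2) (2 * Real.pi - (l1 + l2)) with ⟨he, hle⟩ | ⟨he, hle⟩ <;>
      rw [he] <;> linarith

lemma real_char (l1 l2 l3 : ℝ)
    (h1 : l1 ∈ Set.Icc 0 Real.pi) (h2 : l2 ∈ Set.Icc 0 Real.pi)
    (h3 : l3 ∈ Set.Icc 0 Real.pi) :
    (∃ t : ℝ, 0 ≤ t ∧ t ≤ 1 ∧
        Real.cos l3 = t * Real.cos (l1 + l2) + (1 - t) * Real.cos (l1 - l2)) ↔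
      |l1 - l2| ≤ l3 ∧ l3 ≤ min (l1 + l2) (2 * Real.pi - (l1 + l2)) := by
  obtain ⟨h10, h1p⟩ := h1; obtain ⟨h20, h2p⟩ := h2; obtain ⟨h30, h3p⟩ := h3
  have habs_mem : |l1 - l2| ∈ Set.Icc 0 Real.pi :=
    ⟨abs_nonneg _, abs_le.mpr ⟨by linarith, by linarith⟩⟩
  have hmin_mem : min (l1 + l2) (2 * Real.pi - (l1 + l2)) ∈ Set.Icc 0 Real.pi :=
    min_mem_Icc l1 l2 ⟨h10, h1p⟩ ⟨h20, h2p⟩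
  have hcosmin : Real.cos (min (l1 + l2) (2 * Real.pi - (l1 + l2))) = Real.cos (l1 + l2) :=
    cos_min_eq l1 l2 ⟨h10, h1p⟩ ⟨h20, h2p⟩
  have hcosabs : Real.cos |l1 - l2| = Real.cos (l1 - l2) := Real.cos_abs _
  have hsin1 : 0 ≤ Real.sin l1 := Real.sin_nonneg_of_nonneg_of_le_pi h10 h1p
  have hsin2 : 0 ≤ Real.sin l2 := Real.sin_nonneg_of_nonneg_of_le_pi h20 h2p
  have hcc : Real.cos (l1 + l2) ≤ Real.cos (l1 - l2) := by
    rw [Real.cos_add, Real.cos_sub]; nlinarith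
  have h3mem : l3 ∈ Set.Icc 0 Real.pi := ⟨h30, h3p⟩
  constructor
  · rintro ⟨t, ht0, ht1, hteq⟩
    constructor
    · rw [← (Real.strictAntiOn_cos.le_iff_ge h3mem habs_mem), hcosabs]
      nlinarith
    · rw [← (Real.strictAntiOn_cos.le_iff_ge hmin_mem h3mem), hcosmin]
      nlinarith
  · rintro ⟨hA, hB⟩
    have hcos1 : Real.cos l3 ≤ Real.cos (l1 - l2) := by
      rw [← hcosabs]
      exact (Real.strictAntiOn_cos.le_iff_ge h3mem habs_mem).mpr hA
    have hcos2 : Real.cos (l1 + l2) ≤ Real.cos l3 := by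
      rw [← hcosmin]
      exact (Real.strictAntiOn_cos.le_iff_ge hmin_mem h3mem).mpr hB
    by_cases hd : Real.cos (l1 - l2) - Real.cos (l1 + l2) = 0
    · refine ⟨0, le_refl 0, zero_le_one, ?_⟩
      have : Real.cos l3 = Real.cos (l1 - l2) := by linarith
      rw [this]; ring
    · have hdpos : 0 < Real.cos (l1 - l2) - Real.cos (l1 + l2) := by
        rcases lt_or_eq_of_le hcc with h | h
        · linarith
        · exact absurd (by linarith) hd
      refine ⟨(Real.cos (l1 - l2) - Real.cos l3) / (Real.cos (l1 - l2) - Real.cos (l1 + l2)),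
        div_nonneg (by linarith) hdpos.le, ?_, ?_⟩
      · rw [div_le_one hdpos]; linarith
      · field_simp
        ring


/-- For `λ₁, λ₂, λ₃ ∈ [0, π]`, the identity belongs to `C(λ₁)C(λ₂)C(λ₃)`
iff `|λ₁ − λ₂| ≤ λ₃ ≤ min(λ₁ + λ₂, 2π − (λ₁ + λ₂))`. -/
theorem one_mem_triple_classProd_iff (l₁ l₂ l₃ : ℝ)
    (h₁ : l₁ ∈ Set.Icc 0 Real.pi) (h₂ : l₂ ∈ Set.Icc 0 Real.pi)
    (h₃ : l₃ ∈ Set.Icc 0 Real.pi) :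
    (1 : SU2) ∈ conjClass l₁ * conjClass l₂ * conjClass l₃ ↔
      |l₁ - l₂| ≤ l₃ ∧ l₃ ≤ min (l₁ + l₂) (2 * Real.pi - (l₁ + l₂)) := by
  rw [← real_char l₁ l₂ l₃ h₁ h₂ h₃]
  constructor
  · intro hm
    rw [Set.mem_mul] at hm
    obtain ⟨x, hx, y, hy, hxy⟩ := hm
    rw [Set.mem_mul] at hx
    obtain ⟨g1, hg1, g2, hg2, rfl⟩ := hx
    obtain ⟨u1, rfl⟩ := hg1
    obtain ⟨u2, rfl⟩ := hg2
    obtain ⟨u3, rfl⟩ := hy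
    set k : SU2 := u1⁻¹ * u2 with hk_def
    set t := Complex.normSq (toMat k 0 0) with ht_def
    have htsum := normSq_toMat k
    have hconj : (u1 * su2diag l₁ * u1⁻¹) * (u2 * su2diag l₂ * u2⁻¹)
        = u1 * (su2diag l₁ * k * su2diag l₂ * k⁻¹) * u1⁻¹ := by
      rw [hk_def]; group
    have htr1 : Matrix.trace (toMat ((u1 * su2diag l₁ * u1⁻¹) * (u2 * su2diag l₂ * u2⁻¹)))
        = (t : ℂ) * (2 * (Real.cos (l₁ + l₂) : ℂ))
          + ((1 - t : ℝ) : ℂ) * (2 * (Real.cos (l₁ - l₂) : ℂ)) := by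
      rw [hconj, trace_toMat_conj, trace_formula]
      rw [show Complex.normSq (toMat k 0 1) = 1 - t by linarith]
    have hinv : (u1 * su2diag l₁ * u1⁻¹) * (u2 * su2diag l₂ * u2⁻¹)
        = (u3 * su2diag l₃ * u3⁻¹)⁻¹ := eq_inv_of_mul_eq_one_left hxy
    have htr3 : Matrix.trace (toMat (((u3 * su2diag l₃ * u3⁻¹))⁻¹))
        = 2 * (Real.cos l₃ : ℂ) := by
      have : (u3 * su2diag l₃ * u3⁻¹)⁻¹ = u3 * su2diag (-l₃) * u3⁻¹ := by
        rw [← su2diag_inv]; group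
      rw [this, trace_toMat_conj, trace_su2diag, Real.cos_neg]
    have hC : 2 * (Real.cos l₃ : ℂ)
        = (t : ℂ) * (2 * (Real.cos (l₁ + l₂) : ℂ))
          + ((1 - t : ℝ) : ℂ) * (2 * (Real.cos (l₁ - l₂) : ℂ)) := by
      rw [← htr1, hinv, htr3]
    have hreal : ((Real.cos l₃
        - (t * Real.cos (l₁ + l₂) + (1 - t) * Real.cos (l₁ - l₂)) : ℝ) : ℂ) = 0 := by
      rw [Complex.ofReal_sub, Complex.ofReal_one] at hC
      rw [Complex.ofReal_sub, Complex.ofReal_add, Complex.ofReal_mul, Complex.ofReal_mul,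
        Complex.ofReal_sub, Complex.ofReal_one]
      linear_combination (1 / 2 : ℂ) * hC
    rw [Complex.ofReal_eq_zero, sub_eq_zero] at hreal
    exact ⟨t, Complex.normSq_nonneg _, by linarith [Complex.normSq_nonneg (toMat k 0 1)], hreal⟩
  · rintro ⟨t, ht0, ht1, hteq⟩
    have hkey : Complex.normSq ((Real.sqrt t : ℝ) : ℂ)
        + Complex.normSq ((Real.sqrt (1 - t) : ℝ) : ℂ) = 1 := by
      rw [Complex.normSq_ofReal, Complex.normSq_ofReal,
        Real.mul_self_sqrt ht0, Real.mul_self_sqrt (by linarith)]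
      ring
    set k : SU2 := mkSU2 _ _ hkey with hk_def
    have hk00 : Complex.normSq (toMat k 0 0) = t := by
      rw [hk_def, toMat_mkSU2]
      simp [Complex.normSq_ofReal, Real.mul_self_sqrt ht0]
    have hk01 : Complex.normSq (toMat k 0 1) = 1 - t := by
      rw [hk_def, toMat_mkSU2]
      simp [Complex.normSq_ofReal, Real.mul_self_sqrt (show (0:ℝ) ≤ 1 - t by linarith)]
    set g1 : SU2 := su2diag l₁ with hg1_def
    set g2 : SU2 := k * su2diag l₂ * k⁻¹ with hg2_def
    have htr : Matrix.trace (toMat (g1 * g2)) = 2 * (Real.cos l₃ : ℂ) := by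
      have he : g1 * g2 = su2diag l₁ * k * su2diag l₂ * k⁻¹ := by
        rw [hg1_def, hg2_def]; group
      rw [he, trace_formula, hk00, hk01]
      have h3 : ((Real.cos l₃ : ℝ) : ℂ)
          = ((t * Real.cos (l₁ + l₂) + (1 - t) * Real.cos (l₁ - l₂) : ℝ) : ℂ) :=
        Complex.ofReal_inj.mpr hteq
      rw [Complex.ofReal_add, Complex.ofReal_mul, Complex.ofReal_mul,
        Complex.ofReal_sub, Complex.ofReal_one] at h3
      rw [h3, Complex.ofReal_sub, Complex.ofReal_one]
      ring
    have hmem3 : (g1 * g2)⁻¹ ∈ conjClass l₃ :=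
      inv_mem_conjClass (mem_conjClass_of_trace h₃ htr)
    have hone : (1 : SU2) = (g1 * g2) * (g1 * g2)⁻¹ := by group
    rw [hone]
    exact Set.mul_mem_mul
      (Set.mul_mem_mul (mem_conjClass_self l₁) ⟨k, rfl⟩) hmem3
end

section
/- Let n ≥ 2 be an integer and λ₁, …, λ_{n+1} ∈ [0, π]. If the identity matrix I belongs to the set product C(λ₁)⋯C(λ_{n+1}) in SU(2), then for every integer j with 0 ≤ j ≤ n/2 and every choice of signs ε₁, …, ε_{n+1} ∈ {+1, −1} with exactly n − 2j of the ε_i equal to −1, one has ∑_{i=1}^{n+1} ε_i λ_i ≤ 2jπ. -/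
open Matrix Complex Pointwise

namespace SU2Aux
noncomputable def mat (g : SU2) : Matrix (Fin 2) (Fin 2) ℂ := g.1.1

lemma mat_mul (g h : SU2) : mat (g * h) = mat g * mat h := rfl
lemma mat_one : mat 1 = 1 := rfl
lemma mat_inj : Function.Injective mat := fun _ _ h =>
  Subtype.coe_injective (Subtype.coe_injective h)
lemma mat_inv_mul (g : SU2) : mat g⁻¹ * mat g = 1 := by
  rw [← mat_mul, inv_mul_cancel, mat_one]

lemma mat_det (g : SU2) : Matrix.det (mat g) = 1 := g.2

lemma mat_star (g : SU2) : (mat g)ᴴ = Matrix.adjugate (mat g) := by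
  have h1 : mat g * Matrix.adjugate (mat g) = 1 := by
    rw [Matrix.mul_adjugate, mat_det, one_smul]
  have h2 : (mat g)ᴴ * mat g = 1 := by
    have := g.1.2
    rw [Matrix.mem_unitaryGroup_iff'] at this
    exact this
  calc (mat g)ᴴ = (mat g)ᴴ * (mat g * Matrix.adjugate (mat g)) := by rw [h1, mul_one]
    _ = ((mat g)ᴴ * mat g) * Matrix.adjugate (mat g) := by rw [mul_assoc]
    _ = Matrix.adjugate (mat g) := by rw [h2, one_mul]

lemma mat_11 (g : SU2) : mat g 1 1 = starRingEnd ℂ (mat g 0 0) := by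
  have := congrFun (congrFun (mat_star g) 0) 0
  rw [Matrix.adjugate_fin_two] at this
  simpa [Matrix.conjTranspose_apply] using this.symm

lemma mat_10 (g : SU2) : mat g 1 0 = -(starRingEnd ℂ) (mat g 0 1) := by
  have := congrFun (congrFun (mat_star g) 1) 0
  rw [Matrix.adjugate_fin_two] at this
  rw [Matrix.conjTranspose_apply] at this
  have h2 := congrArg (starRingEnd ℂ) this
  simp at h2
  rw [h2]
  simp

lemma mat_normSq (g : SU2) :
    Complex.normSq (mat g 0 0) + Complex.normSq (mat g 0 1) = 1 := by
  have hd := mat_det g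
  rw [Matrix.det_fin_two, mat_11 g, mat_10 g] at hd
  have : ((Complex.normSq (mat g 0 0) + Complex.normSq (mat g 0 1) : ℝ) : ℂ) = 1 := by
    rw [← hd]
    push_cast
    rw [Complex.normSq_eq_conj_mul_self, Complex.normSq_eq_conj_mul_self]
    ring
  exact_mod_cast this


noncomputable def tr2 (g : SU2) : ℝ := (mat g 0 0).re

lemma norm_eq (g : SU2) : (mat g 0 0).re^2 + ((mat g 0 0).im^2 + (mat g 0 1).re^2 + (mat g 0 1).im^2) = 1 := by
  have := mat_normSq g
  rw [Complex.normSq_apply, Complex.normSq_apply] at this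
  nlinarith [this]

lemma tr2_mem (g : SU2) : tr2 g ∈ Set.Icc (-1 : ℝ) 1 := by
  have := norm_eq g
  rw [Set.mem_Icc, tr2]
  constructor <;> nlinarith [this, sq_nonneg (mat g 0 0).im, sq_nonneg (mat g 0 1).re, sq_nonneg (mat g 0 1).im, sq_nonneg ((mat g 0 0).re + 1), sq_nonneg ((mat g 0 0).re - 1)]

lemma tr2_eq_trace (g : SU2) : tr2 g = (Matrix.trace (mat g)).re / 2 := by
  rw [Matrix.trace_fin_two, mat_11]
  simp [tr2, Complex.add_re]

lemma tr2_mul_ge (g h : SU2) :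
    tr2 g * tr2 h - Real.sqrt (1 - tr2 g ^ 2) * Real.sqrt (1 - tr2 h ^ 2) ≤ tr2 (g * h) := by
  have hm : mat (g * h) 0 0 = mat g 0 0 * mat h 0 0 + mat g 0 1 * mat h 1 0 := by
    rw [mat_mul, Matrix.mul_apply, Fin.sum_univ_two]
  set a := mat g 0 0
  set b := mat g 0 1
  set c := mat h 0 0
  set d := mat h 0 1
  have hng := norm_eq g
  have hnh := norm_eq h
  have ht : tr2 (g * h) = a.re * c.re - a.im * c.im - (b.re * d.re + b.im * d.im) := by
    rw [tr2, hm, mat_10 h]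
    simp [Complex.add_re, Complex.mul_re, Complex.conj_re, Complex.conj_im]
    ring
  rw [ht]
  have h1 : (1 : ℝ) - tr2 g ^ 2 = a.im^2 + b.re^2 + b.im^2 := by
    rw [tr2]; nlinarith [hng]
  have h2 : (1 : ℝ) - tr2 h ^ 2 = c.im^2 + d.re^2 + d.im^2 := by
    rw [tr2]; nlinarith [hnh]
  rw [h1, h2]
  have key : a.im * c.im + (b.re * d.re + b.im * d.im) ≤
      Real.sqrt (a.im^2 + b.re^2 + b.im^2) * Real.sqrt (c.im^2 + d.re^2 + d.im^2) := by
    rw [← Real.sqrt_mul (by positivity)]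
    have cs : (a.im * c.im + (b.re * d.re + b.im * d.im))^2 ≤
        (a.im^2 + b.re^2 + b.im^2) * (c.im^2 + d.re^2 + d.im^2) := by
      nlinarith [sq_nonneg (a.im * d.re - b.re * c.im), sq_nonneg (a.im * d.im - b.im * c.im),
        sq_nonneg (b.re * d.im - b.im * d.re)]
    calc a.im * c.im + (b.re * d.re + b.im * d.im)
        ≤ |a.im * c.im + (b.re * d.re + b.im * d.im)| := le_abs_self _
      _ = Real.sqrt ((a.im * c.im + (b.re * d.re + b.im * d.im))^2) := (Real.sqrt_sq_eq_abs _).symm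
      _ ≤ _ := Real.sqrt_le_sqrt cs
  have : tr2 g * tr2 h = a.re * c.re := by rw [tr2, tr2]
  rw [this]
  linarith [key]

lemma tr2_one : tr2 1 = 1 := by simp [tr2, mat_one, Matrix.one_apply]

lemma tr2_conj (h g : SU2) : tr2 (h * g * h⁻¹) = tr2 g := by
  rw [tr2_eq_trace, tr2_eq_trace]
  congr 2
  rw [mat_mul, mat_mul, Matrix.trace_mul_cycle, mat_inv_mul, one_mul]

lemma mat_su2diag (l : ℝ) : mat (su2diag l) =
    Matrix.diagonal ![Complex.exp (l * Complex.I), Complex.exp (-(l * Complex.I))] := rfl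

lemma tr2_su2diag (l : ℝ) : tr2 (su2diag l) = Real.cos l := by
  rw [tr2_eq_trace, mat_su2diag, Matrix.trace_fin_two]
  have h1 : (l : ℂ) * Complex.I = (l : ℝ) * Complex.I := rfl
  have h2 : -((l : ℂ) * Complex.I) = ((-l : ℝ) : ℂ) * Complex.I := by push_cast; ring
  simp only [Matrix.diagonal_apply_eq]
  show (Complex.exp (l * Complex.I) + Complex.exp (-(l * Complex.I))).re / 2 = Real.cos l
  rw [h2, Complex.add_re, Complex.exp_ofReal_mul_I_re, Complex.exp_ofReal_mul_I_re, Real.cos_neg]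
  ring

lemma tr2_mem_conjClass {l : ℝ} {g : SU2} (hg : g ∈ conjClass l) : tr2 g = Real.cos l := by
  obtain ⟨h, rfl⟩ := hg
  rw [tr2_conj, tr2_su2diag]

noncomputable def m1 : SU2 := su2diag Real.pi

lemma mat_m1 : mat m1 = -1 := by
  rw [show m1 = su2diag Real.pi from rfl, mat_su2diag]
  have h1 : Complex.exp ((Real.pi : ℂ) * Complex.I) = -1 := Complex.exp_pi_mul_I
  have h2 : Complex.exp (-((Real.pi : ℂ) * Complex.I)) = -1 := by
    rw [Complex.exp_neg, h1]; norm_num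
  rw [h1, h2]
  ext i j
  fin_cases i <;> fin_cases j <;> simp [Matrix.diagonal, Matrix.one_apply]

lemma m1_central (g : SU2) : m1 * g = g * m1 := by
  apply mat_inj
  rw [mat_mul, mat_mul, mat_m1]
  simp

lemma m1_sq : m1 * m1 = 1 := by
  apply mat_inj
  rw [mat_mul, mat_m1, mat_one]
  simp

lemma tr2_mul_m1 (g : SU2) : tr2 (g * m1) = -tr2 g := by
  rw [tr2, tr2, mat_mul, mat_m1]
  simp

lemma tr2_m1 : tr2 m1 = -1 := by
  have := tr2_mul_m1 1
  rwa [one_mul, tr2_one] at this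

lemma key : ∀ L : List (SU2 × ℝ),
    (∀ p ∈ L, p.2 ∈ Set.Icc 0 Real.pi ∧ tr2 p.1 = Real.cos p.2) →
    (L.map Prod.snd).sum ≤ Real.pi →
    Real.cos ((L.map Prod.snd).sum) ≤ tr2 ((L.map Prod.fst).prod) := by
  intro L
  induction L with
  | nil => intro _ _; simp [tr2_one]
  | cons p L ih =>
    intro hmem hsum
    simp only [List.map_cons, List.sum_cons, List.prod_cons] at *
    obtain ⟨hp, hcos⟩ := hmem p (List.mem_cons_self (a := p) (l := L))
    have hν : p.2 ∈ Set.Icc 0 Real.pi := hp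
    have hLpos : (0:ℝ) ≤ (L.map Prod.snd).sum := by
      apply List.sum_nonneg
      intro x hx
      obtain ⟨q, hq, rfl⟩ := List.mem_map.mp hx
      exact (hmem q (List.mem_cons_of_mem p hq)).1.1
    have hLsum : (L.map Prod.snd).sum ≤ Real.pi := by linarith [hν.1]
    have hL := ih (fun q hq => hmem q (List.mem_cons_of_mem p hq)) hLsum
    -- θ := arccos of tail trace
    set t := tr2 ((L.map Prod.fst).prod) with ht
    have htm := tr2_mem ((L.map Prod.fst).prod)
    set θ := Real.arccos t with hθ
    have hθmem : θ ∈ Set.Icc 0 Real.pi := ⟨Real.arccos_nonneg t, Real.arccos_le_pi t⟩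
    have hcosθ : Real.cos θ = t := Real.cos_arccos htm.1 htm.2
    have hθle : θ ≤ (L.map Prod.snd).sum := by
      by_contra hcon
      push_neg at hcon
      have := Real.strictAntiOn_cos ⟨hLpos, hLsum⟩ ⟨hθmem.1, hθmem.2⟩ hcon
      rw [hcosθ] at this
      linarith
    have hstep := tr2_mul_ge p.1 ((L.map Prod.fst).prod)
    rw [hcos, ← ht, ← hcosθ] at hstep
    have hs1 : Real.sqrt (1 - Real.cos p.2 ^ 2) = Real.sin p.2 := by
      rw [show (1:ℝ) - Real.cos p.2 ^2 = Real.sin p.2 ^2 by nlinarith [Real.sin_sq_add_cos_sq p.2],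
        Real.sqrt_sq (Real.sin_nonneg_of_nonneg_of_le_pi hν.1 hν.2)]
    have hs2 : Real.sqrt (1 - Real.cos θ ^ 2) = Real.sin θ := by
      rw [show (1:ℝ) - Real.cos θ ^2 = Real.sin θ ^2 by nlinarith [Real.sin_sq_add_cos_sq θ],
        Real.sqrt_sq (Real.sin_nonneg_of_nonneg_of_le_pi hθmem.1 hθmem.2)]
    rw [hs1, hs2] at hstep
    have hcosadd : Real.cos (p.2 + θ) ≤ tr2 (p.1 * (L.map Prod.fst).prod) := by
      rw [Real.cos_add]; linarith [hstep]
    have hmono : Real.cos (p.2 + (L.map Prod.snd).sum) ≤ Real.cos (p.2 + θ) := by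
      apply Real.cos_le_cos_of_nonneg_of_le_pi
      · linarith [hν.1, hθmem.1]
      · linarith
      · linarith
    linarith

lemma prod_mul_central {G : Type*} [Monoid G] (z : G) (hz : ∀ x, z * x = x * z) :
    ∀ L : List (G × ℕ),
      (L.map fun p => p.1 * z ^ p.2).prod = (L.map Prod.fst).prod * z ^ ((L.map Prod.snd).sum) := by
  intro L
  induction L with
  | nil => simp
  | cons p L ih =>
    simp only [List.map_cons, List.prod_cons, List.sum_cons, ih]
    have hc : ∀ (k : ℕ) (x : G), z ^ k * x = x * z ^ k := fun k x =>
      Commute.pow_left (hz x) k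
    rw [pow_add, mul_assoc, ← mul_assoc (z ^ p.2), hc p.2, mul_assoc, ← mul_assoc, ← mul_assoc]


end SU2Aux

open SU2Aux in
/-- For `n ≥ 2` and `λ₁, …, λ_{n+1} ∈ [0, π]`, if the identity belongs to
`C(λ₁)⋯C(λ_{n+1})` then for every `j` with `0 ≤ j ≤ n/2` and every choice of signs
`ε_i ∈ {1, −1}` with exactly `n − 2j` of them equal to `−1`, one has
`∑ ε_i λ_i ≤ 2jπ`. -/
theorem one_mem_classProd_necessary (n : ℕ) (hn : 2 ≤ n) (l : Fin (n + 1) → ℝ)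
    (hl : ∀ i, l i ∈ Set.Icc 0 Real.pi)
    (h1 : (1 : SU2) ∈ classProd l) :
    ∀ j : ℕ, 2 * j ≤ n →
      ∀ ε : Fin (n + 1) → ℝ, (∀ i, ε i = 1 ∨ ε i = -1) →
        (Finset.univ.filter fun i => ε i = -1).card = n - 2 * j →
        ∑ i, ε i * l i ≤ 2 * j * Real.pi := by
  intro j hj ε hε hcard
  rw [classProd, Set.mem_prod_list_ofFn] at h1
  obtain ⟨f, hf⟩ := h1
  set g : Fin (n + 1) → SU2 := fun i => (f i : SU2) with hgdef
  have hg : ∀ i, tr2 (g i) = Real.cos (l i) := fun i => tr2_mem_conjClass (f i).2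
  classical
  set e : Fin (n + 1) → ℕ := fun i => if ε i = 1 then 1 else 0 with hedef
  set D : Fin (n + 1) → SU2 := fun i => g i * m1 ^ e i with hDdef
  set ν : Fin (n + 1) → ℝ := fun i => if ε i = 1 then Real.pi - l i else l i with hνdef
  -- card of plus signs
  have hcard1 : (Finset.univ.filter fun i => ε i = 1).card = 2 * j + 1 := by
    have hsplit := Finset.card_filter_add_card_filter_not
      (s := (Finset.univ : Finset (Fin (n + 1)))) (p := fun i => ε i = -1)
    have heq : (Finset.univ.filter fun i => ¬ ε i = -1)
        = (Finset.univ.filter fun i => ε i = 1) := by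
      apply Finset.filter_congr
      intro i _
      rcases hε i with h | h <;> simp [h] <;> norm_num
    rw [heq, hcard, Finset.card_univ, Fintype.card_fin] at hsplit
    omega
  have hesum : ∑ i, e i = 2 * j + 1 := by
    rw [hedef, ← Finset.card_filter, hcard1]
  -- helper facts about D and ν
  have hν1 : ∀ i, ε i = 1 → ν i = Real.pi - l i := by
    intro i h; rw [hνdef]; simp [h]
  have hν2 : ∀ i, ε i = -1 → ν i = l i := by
    intro i h; rw [hνdef]; simp only [h]
    rw [if_neg (by norm_num : ¬(-1 : ℝ) = 1)]
  have hD1 : ∀ i, ε i = 1 → D i = g i * m1 := by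
    intro i h; rw [hDdef]; simp [hedef, h]
  have hD2 : ∀ i, ε i = -1 → D i = g i := by
    intro i h; rw [hDdef]; simp only [hedef, h]
    rw [if_neg (by norm_num : ¬(-1 : ℝ) = 1), pow_zero, mul_one]
  -- the product of the D i
  have hprod : (List.ofFn D).prod = m1 := by
    have h : (List.ofFn D).prod = (List.ofFn g).prod * m1 ^ (∑ i, e i) := by
      have h0 := prod_mul_central m1 m1_central (List.ofFn fun i => (g i, e i))
      rw [List.map_ofFn, List.map_ofFn, List.map_ofFn, List.sum_ofFn] at h0
      exact h0
    rw [h, hf, hesum, one_mul, pow_succ, pow_mul]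
    rw [show m1 ^ 2 = m1 * m1 from sq m1, m1_sq, one_pow, one_mul]
  -- apply the key inequality
  set L : List (SU2 × ℝ) := List.ofFn fun i => (D i, ν i) with hLdef
  have hLmem : ∀ p ∈ L, p.2 ∈ Set.Icc 0 Real.pi ∧ tr2 p.1 = Real.cos p.2 := by
    intro p hp
    rw [hLdef, List.mem_ofFn] at hp
    obtain ⟨i, rfl⟩ := hp
    have hli := hl i
    rcases hε i with h | h
    · rw [show ((D i, ν i) : SU2 × ℝ).2 = ν i from rfl, show ((D i, ν i) : SU2 × ℝ).1 = D i from rfl,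
        hν1 i h, hD1 i h]
      refine ⟨⟨by linarith [hli.2], by linarith [hli.1, Real.pi_pos]⟩, ?_⟩
      rw [tr2_mul_m1, hg i, Real.cos_pi_sub]
    · rw [show ((D i, ν i) : SU2 × ℝ).2 = ν i from rfl, show ((D i, ν i) : SU2 × ℝ).1 = D i from rfl,
        hν2 i h, hD2 i h]
      exact ⟨hli, hg i⟩
  have hsnd : L.map Prod.snd = List.ofFn ν := by
    rw [hLdef, List.map_ofFn]; rfl
  have hfst : (L.map Prod.fst).prod = m1 := by
    rw [hLdef, List.map_ofFn]
    exact hprod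
  have hsum : (L.map Prod.snd).sum = ∑ i, ν i := by rw [hsnd, List.sum_ofFn]
  have hν0 : (0:ℝ) ≤ ∑ i, ν i := by
    apply Finset.sum_nonneg
    intro i _
    have hli := hl i
    rcases hε i with h | h
    · rw [hν1 i h]; linarith [hli.2]
    · rw [hν2 i h]; exact hli.1
  have hSge : Real.pi ≤ ∑ i, ν i := by
    by_cases hS : ∑ i, ν i ≤ Real.pi
    · have hk := key L hLmem (by rw [hsum]; exact hS)
      rw [hsum, hfst, tr2_m1] at hk
      have hge := Real.neg_one_le_cos (∑ i, ν i)
      have hcoseq : Real.cos (∑ i, ν i) = Real.cos Real.pi := by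
        rw [Real.cos_pi]; linarith
      have heq := Real.injOn_cos ⟨hν0, hS⟩ ⟨Real.pi_nonneg, le_refl Real.pi⟩ hcoseq
      linarith [heq.ge, heq.le]
    · linarith
  -- final computation
  have hfin : (∑ i, ν i) + ∑ i, ε i * l i = ((2 * j + 1 : ℕ) : ℝ) * Real.pi := by
    rw [← Finset.sum_add_distrib]
    have hterm : ∀ i ∈ Finset.univ, ν i + ε i * l i
        = if ε i = 1 then Real.pi else 0 := by
      intro i _
      rcases hε i with h | h
      · rw [hν1 i h, h, if_pos rfl]; ring
      · rw [hν2 i h, h, if_neg (by norm_num : ¬(-1 : ℝ) = 1)]; ring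
    rw [Finset.sum_congr rfl hterm, Finset.sum_ite, Finset.sum_const, Finset.sum_const_zero,
      add_zero, hcard1, nsmul_eq_mul]
  push_cast at hfin
  linarith
end

section
/- Let n ≥ 2 be an integer and λ₁, …, λ_n ∈ [0, π]. If the set product C(λ₁)⋯C(λ_n) equals all of SU(2), then for every integer j with 0 ≤ j < n/2 and every choice of signs ε₁, …, ε_n ∈ {+1, −1} with exactly j of the ε_i equal to −1, one has −(j − 1)π ≤ ∑_{i=1}^{n} ε_i λ_i ≤ (n − j − 1)π. -/
open Matrix Complex Pointwise

open Matrix Complex Pointwise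
noncomputable def mat (g : SU2) : Matrix (Fin 2) (Fin 2) ℂ :=
  ((g : Matrix.unitaryGroup (Fin 2) ℂ) : Matrix (Fin 2) (Fin 2) ℂ)
lemma mat_mul (g h : SU2) : mat (g*h) = mat g * mat h := rfl
lemma mat_one : mat 1 = 1 := rfl
lemma mat_det (g : SU2) : Matrix.det (mat g) = 1 := g.2
lemma mat_unitary (g : SU2) : mat g * (mat g)ᴴ = 1 ∧ (mat g)ᴴ * mat g = 1 := by
  have h := g.1.2
  rw [Unitary.mem_iff] at h
  rw [← Matrix.star_eq_conjTranspose]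
  exact ⟨h.2, h.1⟩
lemma entries (g : SU2) :
    mat g 1 1 = starRingEnd ℂ (mat g 0 0) ∧
    mat g 1 0 = - starRingEnd ℂ (mat g 0 1) ∧
    Complex.normSq (mat g 0 0) + Complex.normSq (mat g 0 1) = 1 := by
  obtain ⟨h1, h2⟩ := mat_unitary g
  set a := mat g 0 0; set b := mat g 0 1; set c := mat g 1 0; set d := mat g 1 1
  have e1 : a * starRingEnd ℂ a + b * starRingEnd ℂ b = 1 := by
    have := congrFun (congrFun h1 0) 0
    simpa [Matrix.mul_apply, Fin.sum_univ_two, Matrix.conjTranspose_apply] using this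
  have e2 : c * starRingEnd ℂ a + d * starRingEnd ℂ b = 0 := by
    have := congrFun (congrFun h1 1) 0
    simpa [Matrix.mul_apply, Fin.sum_univ_two, Matrix.conjTranspose_apply] using this
  have e3 : a * d - b * c = 1 := by
    have := mat_det g
    rwa [Matrix.det_fin_two] at this
  have hd : d = starRingEnd ℂ a := by
    linear_combination (starRingEnd ℂ a) * e3 - d * e1 + b * e2
  have hc : c = - starRingEnd ℂ b := by
    linear_combination (- starRingEnd ℂ b) * e3 + a * e2 - c * e1
  refine ⟨hd, hc, ?_⟩
  have := e1
  rw [Complex.mul_conj, Complex.mul_conj] at this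
  exact_mod_cast this
lemma exp_add_exp_neg (lam : ℝ) :
    Complex.exp (lam * Complex.I) + Complex.exp (-(lam * Complex.I)) = 2 * Real.cos lam := by
  rw [Complex.exp_mul_I]
  rw [show -((lam:ℂ) * Complex.I) = (-lam : ℝ) * Complex.I by push_cast; ring]
  rw [Complex.exp_mul_I]
  push_cast
  rw [Complex.cos_neg, Complex.sin_neg]
  ring

lemma re_of_conjClass {lam : ℝ} {g : SU2} (hg : g ∈ conjClass lam) :
    (mat g 0 0).re = Real.cos lam := by
  obtain ⟨h, rfl⟩ := hg
  have htr : Matrix.trace (mat (h * su2diag lam * h⁻¹)) = Matrix.trace (mat (su2diag lam)) := by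
    rw [mat_mul, mat_mul, Matrix.trace_mul_cycle]
    rw [← mat_mul, inv_mul_cancel, mat_one, Matrix.one_mul]
  have hdiag : Matrix.trace (mat (su2diag lam)) = 2 * Real.cos lam := by
    show Matrix.trace (Matrix.diagonal ![Complex.exp (lam * Complex.I), Complex.exp (-(lam * Complex.I))]) = _
    rw [Matrix.trace_diagonal, Fin.sum_univ_two]
    exact exp_add_exp_neg lam
  set g := h * su2diag lam * h⁻¹
  have htr2 : Matrix.trace (mat g) = mat g 0 0 + mat g 1 1 := by
    rw [Matrix.trace_fin_two]
  have he := (entries g).1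
  have heq : (mat g 0 0 + starRingEnd ℂ (mat g 0 0)) = 2 * Real.cos lam := by
    rw [← he, ← htr2, htr, hdiag]
  rw [Complex.add_conj] at heq
  have : 2 * (mat g 0 0).re = 2 * Real.cos lam := by exact_mod_cast heq
  linarith
lemma cs3 (q1 u1 v1 q2 u2 v2 : ℝ) :
    q1*q2 + u1*u2 + v1*v2 ≤
      Real.sqrt (q1^2+u1^2+v1^2) * Real.sqrt (q2^2+u2^2+v2^2) := by
  set X := Real.sqrt (q1^2+u1^2+v1^2) with hX
  set Y := Real.sqrt (q2^2+u2^2+v2^2) with hY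
  have hXnn : 0 ≤ X := Real.sqrt_nonneg _
  have hYnn : 0 ≤ Y := Real.sqrt_nonneg _
  have hX2 : X^2 = q1^2+u1^2+v1^2 := Real.sq_sqrt (by positivity)
  have hY2 : Y^2 = q2^2+u2^2+v2^2 := Real.sq_sqrt (by positivity)
  rcases eq_or_lt_of_le (mul_nonneg hXnn hYnn) with h | h
  · have h1 : X = 0 ∨ Y = 0 := by
      rcases mul_eq_zero.mp h.symm with h' | h'
      · exact Or.inl h'
      · exact Or.inr h'
    rcases h1 with h' | h'
    · have : q1 = 0 ∧ u1 = 0 ∧ v1 = 0 := by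
        rw [h'] at hX2; constructor; nlinarith; constructor; nlinarith; nlinarith
      rw [this.1, this.2.1, this.2.2]; ring_nf; nlinarith [mul_nonneg hXnn hYnn]
    · have : q2 = 0 ∧ u2 = 0 ∧ v2 = 0 := by
        rw [h'] at hY2; constructor; nlinarith; constructor; nlinarith; nlinarith
      rw [this.1, this.2.1, this.2.2]; ring_nf; nlinarith [mul_nonneg hXnn hYnn]
  · nlinarith [sq_nonneg (q1*Y - q2*X), sq_nonneg (u1*Y - u2*X), sq_nonneg (v1*Y - v2*X)]

/-- Key subadditivity inequality for the real part of the (0,0) entry of a product. -/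
lemma re_mul_ge (A B : SU2) :
    (mat A 0 0).re * (mat B 0 0).re
      - Real.sqrt (1 - (mat A 0 0).re^2) * Real.sqrt (1 - (mat B 0 0).re^2)
      ≤ (mat (A*B) 0 0).re := by
  obtain ⟨hA1, hA2, hA3⟩ := entries A
  obtain ⟨hB1, hB2, hB3⟩ := entries B
  have hAB : mat (A*B) 0 0 = mat A 0 0 * mat B 0 0 - mat A 0 1 * starRingEnd ℂ (mat B 0 1) := by
    rw [mat_mul, Matrix.mul_apply, Fin.sum_univ_two, hB2]; ring
  have h1A : 1 - (mat A 0 0).re^2 = (mat A 0 0).im^2 + (mat A 0 1).re^2 + (mat A 0 1).im^2 := by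
    rw [Complex.normSq_apply, Complex.normSq_apply] at hA3; nlinarith
  have h1B : 1 - (mat B 0 0).re^2 = (mat B 0 0).im^2 + (mat B 0 1).re^2 + (mat B 0 1).im^2 := by
    rw [Complex.normSq_apply, Complex.normSq_apply] at hB3; nlinarith
  rw [hAB, h1A, h1B]
  have hre : (mat A 0 0 * mat B 0 0 - mat A 0 1 * starRingEnd ℂ (mat B 0 1)).re
      = (mat A 0 0).re * (mat B 0 0).re - (mat A 0 0).im * (mat B 0 0).im
        - ((mat A 0 1).re * (mat B 0 1).re + (mat A 0 1).im * (mat B 0 1).im) := by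
    simp [Complex.mul_re, Complex.conj_re, Complex.conj_im]
  rw [hre]
  have := cs3 ((mat A 0 0).im) ((mat A 0 1).re) ((mat A 0 1).im)
    ((mat B 0 0).im) ((mat B 0 1).re) ((mat B 0 1).im)
  linarith
lemma mem_one_re {g : SU2} (hg : g ∈ (1 : Set SU2)) : (mat g 0 0).re = 1 := by
  rw [Set.mem_one] at hg
  subst hg
  rw [mat_one]
  simp [Matrix.one_apply_eq]

lemma re_bounds (g : SU2) : -1 ≤ (mat g 0 0).re ∧ (mat g 0 0).re ≤ 1 := by
  have h := (entries g).2.2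
  rw [Complex.normSq_apply, Complex.normSq_apply] at h
  constructor <;> nlinarith [sq_nonneg ((mat g 0 0).re + 1), sq_nonneg ((mat g 0 0).re - 1)]

lemma lowerRe : ∀ L : List ℝ, (∀ a ∈ L, a ∈ Set.Icc 0 Real.pi) → L.sum ≤ Real.pi →
    ∀ g ∈ (L.map conjClass).prod, Real.cos L.sum ≤ (mat g 0 0).re := by
  intro L
  induction L with
  | nil =>
    intro _ _ g hg
    simp only [List.map_nil, List.prod_nil, List.sum_nil, Real.cos_zero]
    simp only [List.map_nil, List.prod_nil] at hg
    exact le_of_eq (mem_one_re hg).symm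
  | cons a T ih =>
    intro hmem hsum g hg
    have ha : a ∈ Set.Icc 0 Real.pi := hmem a List.mem_cons_self
    have hT : ∀ b ∈ T, b ∈ Set.Icc 0 Real.pi := fun b hb => hmem b (List.mem_cons_of_mem a hb)
    have hTnn : 0 ≤ T.sum := List.sum_nonneg (fun b hb => (hT b hb).1)
    rw [List.sum_cons] at hsum ⊢
    have hTsum : T.sum ≤ Real.pi := by linarith [ha.1]
    rw [List.map_cons, List.prod_cons] at hg
    rw [Set.mem_mul] at hg
    obtain ⟨g1, hg1, y, hy, rfl⟩ := hg
    have hra : (mat g1 0 0).re = Real.cos a := re_of_conjClass hg1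
    have hyre : Real.cos T.sum ≤ (mat y 0 0).re := ih hT hTsum y hy
    set r := (mat y 0 0).re with hrdef
    obtain ⟨hr2, hr1⟩ := re_bounds y
    set s := Real.arccos r with hsdef
    have hcs : Real.cos s = r := Real.cos_arccos hr2 hr1
    have hs0 : 0 ≤ s := Real.arccos_nonneg r
    have hspi : s ≤ Real.pi := Real.arccos_le_pi r
    have hsle : s ≤ T.sum := by
      by_contra hlt
      push_neg at hlt
      have := Real.cos_lt_cos_of_nonneg_of_le_pi hTnn hspi hlt
      rw [hcs] at this
      linarith
    have key := re_mul_ge g1 y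
    rw [hra] at key
    have hsin1 : Real.sqrt (1 - Real.cos a ^ 2) = Real.sin a := by
      rw [Real.sin_eq_sqrt_one_sub_cos_sq ha.1 ha.2]
    have hsin2 : Real.sqrt (1 - r ^ 2) = Real.sin s := by
      rw [Real.sin_eq_sqrt_one_sub_cos_sq hs0 hspi, hcs]
    rw [hsin1, hsin2] at key
    have hc : Real.cos a * r - Real.sin a * Real.sin s = Real.cos (a + s) := by
      rw [Real.cos_add, hcs]
    rw [hc] at key
    have hmono : Real.cos (a + T.sum) ≤ Real.cos (a + s) := by
      apply Real.cos_le_cos_of_nonneg_of_le_pi (by linarith [ha.1]) hsum (by linarith)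
    linarith

lemma pi_le_sum (L : List ℝ) (hmem : ∀ a ∈ L, a ∈ Set.Icc 0 Real.pi)
    (g : SU2) (hg : g ∈ (L.map conjClass).prod) (hre : (mat g 0 0).re = -1) :
    Real.pi ≤ L.sum := by
  by_contra hcon
  push_neg at hcon
  have hnn : 0 ≤ L.sum := List.sum_nonneg (fun b hb => (hmem b hb).1)
  have h1 := lowerRe L hmem (le_of_lt hcon) g hg
  have h2 : Real.cos Real.pi < Real.cos L.sum :=
    Real.cos_lt_cos_of_nonneg_of_le_pi hnn le_rfl hcon
  rw [Real.cos_pi] at h2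
  rw [hre] at h1
  linarith
noncomputable def m1 : SU2 := su2diag Real.pi

lemma mat_m1 : mat m1 = -1 := by
  show (Matrix.diagonal ![Complex.exp (Real.pi * Complex.I), Complex.exp (-(Real.pi * Complex.I))]) = -1
  have h1 : Complex.exp ((Real.pi : ℂ) * Complex.I) = -1 := Complex.exp_pi_mul_I
  have h2 : Complex.exp (-((Real.pi : ℂ) * Complex.I)) = -1 := by
    rw [Complex.exp_neg, h1]; norm_num
  ext i j
  fin_cases i <;> fin_cases j <;>
    simp [Matrix.diagonal, h1, h2, Matrix.one_apply]

lemma mat_injective {g h : SU2} (hgh : mat g = mat h) : g = h :=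
  Subtype.ext (Subtype.ext hgh)

lemma m1_central (u : SU2) : m1 * u = u * m1 := by
  apply mat_injective
  rw [mat_mul, mat_mul, mat_m1]
  simp

lemma m1_sq : m1 * m1 = 1 := by
  apply mat_injective
  rw [mat_mul, mat_m1, mat_one]
  simp

lemma m1_re : (mat m1 0 0).re = -1 := by rw [mat_m1]; simp [Matrix.one_apply]

lemma m1_mem : m1 ∈ conjClass Real.pi := ⟨1, by simp [m1]⟩

noncomputable def wel : SU2 :=
  ⟨⟨!![0,1;(-1:ℂ),0], by
    rw [Matrix.mem_unitaryGroup_iff]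
    have hs : star !![0,1;(-1:ℂ),0] = !![0,-1;(1:ℂ),0] := by
      rw [Matrix.star_eq_conjTranspose]
      ext i j
      fin_cases i <;> fin_cases j <;> simp
    rw [hs]
    rw [Matrix.mul_fin_two]
    norm_num
    exact Matrix.one_fin_two.symm⟩, by
    rw [mem_SU2_iff]
    norm_num [Matrix.det_fin_two_of]⟩

lemma wel_conj (lam : ℝ) : wel * su2diag (Real.pi - lam) * wel⁻¹ = m1 * su2diag lam := by
  have key : wel * su2diag (Real.pi - lam) = (m1 * su2diag lam) * wel := by
    apply mat_injective
    rw [mat_mul, mat_mul, mat_mul, mat_m1]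
    show !![0,1;(-1:ℂ),0] * Matrix.diagonal ![Complex.exp ((Real.pi - lam : ℝ) * Complex.I), Complex.exp (-((Real.pi - lam : ℝ) * Complex.I))]
      = -1 * Matrix.diagonal ![Complex.exp (lam * Complex.I), Complex.exp (-(lam * Complex.I))] * !![0,1;(-1:ℂ),0]
    have e1 : Complex.exp (((Real.pi : ℂ) - (lam:ℂ)) * Complex.I) = -Complex.exp (-((lam:ℂ) * Complex.I)) := by
      rw [sub_mul, Complex.exp_sub, Complex.exp_pi_mul_I]
      rw [Complex.exp_neg]
      field_simp
    have e2 : Complex.exp (-(((Real.pi : ℂ) - (lam:ℂ)) * Complex.I)) = -Complex.exp ((lam:ℂ) * Complex.I) := by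
      rw [show -(((Real.pi:ℂ) - (lam:ℂ)) * Complex.I) = (lam:ℂ)*Complex.I - (Real.pi:ℂ) * Complex.I by ring]
      rw [Complex.exp_sub, Complex.exp_pi_mul_I]
      field_simp
    push_cast
    ext i j
    fin_cases i <;> fin_cases j <;>
      simp [Matrix.mul_apply, Fin.sum_univ_two, Matrix.diagonal, e1, e2]
  rw [key]
  group

lemma flip_mem {lam : ℝ} {g : SU2} (hg : g ∈ conjClass lam) :
    m1 * g ∈ conjClass (Real.pi - lam) := by
  obtain ⟨h, rfl⟩ := hg
  refine ⟨h * wel, ?_⟩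
  have : h * wel * su2diag (Real.pi - lam) * (h * wel)⁻¹
      = h * (wel * su2diag (Real.pi - lam) * wel⁻¹) * h⁻¹ := by group
  rw [this, wel_conj]
  rw [show h * (m1 * su2diag lam) * h⁻¹ = (h * m1) * su2diag lam * h⁻¹ by group]
  rw [← m1_central h]
  group
lemma flip_prod {L L' : List ℝ}
    (h : List.Forall₂ (fun a b => b = a ∨ b = Real.pi - a) L L') :
    ∃ t : SU2, t * t = 1 ∧ (∀ u : SU2, t * u = u * t) ∧
      ∀ x ∈ (L.map conjClass).prod, t * x ∈ (L'.map conjClass).prod := by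
  induction h with
  | nil =>
    exact ⟨1, by simp, fun u => by simp, fun x hx => by simpa using hx⟩
  | @cons a b T T' hab _ ih =>
    obtain ⟨t, ht2, htc, htp⟩ := ih
    rcases hab with hb | hb
    · refine ⟨t, ht2, htc, fun x hx => ?_⟩
      rw [List.map_cons, List.prod_cons, Set.mem_mul] at hx ⊢
      obtain ⟨g1, hg1, y, hy, rfl⟩ := hx
      refine ⟨g1, by rw [hb]; exact hg1, t * y, htp y hy, ?_⟩
      apply mat_injective
      simp only [mat_mul]
      have hTG := congrArg mat (htc g1)
      simp only [mat_mul] at hTG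
      rw [← Matrix.mul_assoc, ← Matrix.mul_assoc, hTG]
    · refine ⟨m1 * t, ?_, ?_, ?_⟩
      · apply mat_injective
        simp only [mat_mul, mat_m1, mat_one]
        rw [neg_one_mul, Matrix.neg_mul, Matrix.mul_neg, neg_neg]
        have := congrArg mat ht2
        simp only [mat_mul, mat_one] at this
        exact this
      · intro u
        apply mat_injective
        simp only [mat_mul, mat_m1]
        have hTU := congrArg mat (htc u)
        simp only [mat_mul] at hTU
        rw [neg_one_mul, Matrix.neg_mul, Matrix.mul_neg, hTU]
      · intro x hx
        rw [List.map_cons, List.prod_cons, Set.mem_mul] at hx ⊢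
        obtain ⟨g1, hg1, y, hy, rfl⟩ := hx
        refine ⟨m1 * g1, by rw [hb]; exact flip_mem hg1, t * y, htp y hy, ?_⟩
        apply mat_injective
        simp only [mat_mul, mat_m1]
        have hTG := congrArg mat (htc g1)
        simp only [mat_mul] at hTG
        have hkey : mat g1 * (mat t * mat y) = mat t * (mat g1 * mat y) := by
          rw [← Matrix.mul_assoc, ← hTG, Matrix.mul_assoc]
        simp only [neg_one_mul, Matrix.neg_mul, Matrix.mul_assoc]
        rw [hkey]

lemma forall₂_ofFn {n : ℕ} (f g : Fin n → ℝ) (R : ℝ → ℝ → Prop) (h : ∀ i, R (f i) (g i)) :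
    List.Forall₂ R (List.ofFn f) (List.ofFn g) := by
  induction n with
  | zero => simp
  | succ m ih =>
    rw [List.ofFn_succ, List.ofFn_succ]
    exact List.Forall₂.cons (h 0) (ih _ _ (fun i => h i.succ))

lemma classProd_eq' (n : ℕ) (l : Fin n → ℝ) :
    classProd l = ((List.ofFn l).map conjClass).prod := by
  unfold classProd
  rw [List.map_ofFn]
  rfl

/-- For `n ≥ 2` and `λ₁, …, λ_n ∈ [0, π]`, if `C(λ₁)⋯C(λ_n) = SU(2)` then
for every `j` with `0 ≤ j < n/2` and every choice of signs `ε_i ∈ {1, −1}` with exactly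
`j` of them equal to `−1`, one has `−(j − 1)π ≤ ∑ ε_i λ_i ≤ (n − j − 1)π`. -/
theorem classProd_eq_univ_necessary (n : ℕ) (hn : 2 ≤ n) (l : Fin n → ℝ)
    (hl : ∀ i, l i ∈ Set.Icc 0 Real.pi)
    (hsurj : classProd l = Set.univ) :
    ∀ j : ℕ, 2 * j < n →
      ∀ ε : Fin n → ℝ, (∀ i, ε i = 1 ∨ ε i = -1) →
        (Finset.univ.filter fun i => ε i = -1).card = j →
        -(((j : ℝ) - 1) * Real.pi) ≤ ∑ i, ε i * l i ∧
          ∑ i, ε i * l i ≤ ((n : ℝ) - j - 1) * Real.pi := by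
  intro j hj ε hε hcard
  set μ : Fin n → ℝ := fun i => if ε i = 1 then l i else Real.pi - l i with hμdef
  set ν : Fin n → ℝ := fun i => Real.pi - μ i with hνdef
  have hμIcc : ∀ i, μ i ∈ Set.Icc 0 Real.pi := by
    intro i
    by_cases h : ε i = 1 <;> simp only [hμdef, h, if_true, if_false]
    · exact hl i
    · exact ⟨by linarith [(hl i).2], by linarith [(hl i).1]⟩
  have hμmem : ∀ a ∈ List.ofFn μ, a ∈ Set.Icc 0 Real.pi := by
    intro a ha
    rw [List.mem_ofFn] at ha
    obtain ⟨i, rfl⟩ := ha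
    exact hμIcc i
  have hνmem : ∀ a ∈ List.ofFn ν, a ∈ Set.Icc 0 Real.pi := by
    intro a ha
    rw [List.mem_ofFn] at ha
    obtain ⟨i, rfl⟩ := ha
    refine ⟨?_, ?_⟩
    · show (0:ℝ) ≤ Real.pi - μ i
      linarith [(hμIcc i).2]
    · show Real.pi - μ i ≤ Real.pi
      linarith [(hμIcc i).1]
  have key : ∀ f : Fin n → ℝ, (∀ i, f i = l i ∨ f i = Real.pi - l i) →
      (∀ a ∈ List.ofFn f, a ∈ Set.Icc 0 Real.pi) → Real.pi ≤ (List.ofFn f).sum := by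
    intro f hf hfmem
    obtain ⟨t, ht2, htc, htp⟩ := flip_prod (forall₂_ofFn l f _ hf)
    have hx : (t * m1) ∈ classProd l := by rw [hsurj]; trivial
    rw [classProd_eq'] at hx
    have hmem := htp _ hx
    have hm : t * (t * m1) = m1 := by rw [← mul_assoc, ht2, one_mul]
    rw [hm] at hmem
    exact pi_le_sum _ hfmem m1 hmem m1_re
  have h1 : Real.pi ≤ (List.ofFn μ).sum := by
    apply key μ _ hμmem
    intro i
    by_cases h : ε i = 1
    · left; show (if ε i = 1 then l i else Real.pi - l i) = l i; rw [if_pos h]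
    · right; show (if ε i = 1 then l i else Real.pi - l i) = Real.pi - l i; rw [if_neg h]
  have h2 : Real.pi ≤ (List.ofFn ν).sum := by
    apply key ν _ hνmem
    intro i
    by_cases h : ε i = 1
    · right
      show Real.pi - (if ε i = 1 then l i else Real.pi - l i) = Real.pi - l i
      rw [if_pos h]
    · left
      show Real.pi - (if ε i = 1 then l i else Real.pi - l i) = l i
      rw [if_neg h]; ring
  rw [List.sum_ofFn] at h1 h2
  have hsum : ∑ i, μ i = (∑ i, ε i * l i) + (j : ℝ) * Real.pi := by
    have heach : ∀ i, μ i = ε i * l i + (if ε i = -1 then Real.pi else 0) := by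
      intro i
      rcases hε i with h | h
      · have h' : ε i ≠ -1 := by rw [h]; norm_num
        show (if ε i = 1 then l i else Real.pi - l i) = _
        rw [if_pos h, if_neg h', h]; ring
      · have h' : ε i ≠ 1 := by rw [h]; norm_num
        show (if ε i = 1 then l i else Real.pi - l i) = _
        rw [if_neg h', if_pos h, h]; ring
    rw [Finset.sum_congr rfl (fun i _ => heach i), Finset.sum_add_distrib]
    congr 1
    rw [← Finset.sum_filter, Finset.sum_const, hcard, nsmul_eq_mul]
  have hνsum : ∑ i, ν i = (n : ℝ) * Real.pi - ∑ i, μ i := by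
    simp only [hνdef]
    rw [Finset.sum_sub_distrib, Finset.sum_const, Finset.card_univ, Fintype.card_fin,
      nsmul_eq_mul]
  rw [hsum] at h1
  rw [hνsum, hsum] at h2
  constructor <;> [skip; skip] <;> nlinarith [Real.pi_pos]
end

section
/- The set product C(π/2)C(π/2) equals all of SU(2); that is, every element of SU(2) is a product of two matrices each conjugate in SU(2) to diag(i, −i). -/
open Matrix Complex Pointwise

namespace SU2aux

/-- underlying matrix of an element of `SU2` -/
noncomputable def m (g : SU2) : Matrix (Fin 2) (Fin 2) ℂ := g.1.1

lemma m_mul (a b : SU2) : m (a * b) = m a * m b := rfl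
lemma m_inv (a : SU2) : m a⁻¹ = star (m a) := rfl

lemma m_injective : Function.Injective m := fun a b h => Subtype.ext (Subtype.ext h)

lemma m_su2diag_halfPi :
    m (su2diag (Real.pi / 2)) = !![Complex.I, 0; 0, -Complex.I] := by
  have h1 : Complex.exp ((Real.pi : ℂ) / 2 * Complex.I) = Complex.I := by
    rw [Complex.exp_mul_I, Complex.cos_pi_div_two, Complex.sin_pi_div_two]
    ring
  have h2 : Complex.exp (-((Real.pi : ℂ) / 2 * Complex.I)) = -Complex.I := by
    rw [Complex.exp_neg, h1, Complex.inv_I]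
  show Matrix.diagonal _ = _
  ext i j
  fin_cases i <;> fin_cases j <;>
    simp [Matrix.diagonal, h1, h2]

/-- constructor for elements of SU2 -/
noncomputable def mk (a b : ℂ) (h : a * (starRingEnd ℂ) a + b * (starRingEnd ℂ) b = 1) :
    SU2 :=
  ⟨⟨!![a, b; -(starRingEnd ℂ) b, (starRingEnd ℂ) a], by
    rw [Matrix.mem_unitaryGroup_iff]
    ext i j
    fin_cases i <;> fin_cases j <;>
      simp [Matrix.mul_apply, Fin.sum_univ_two, Matrix.star_apply, mul_comm] <;>
      linear_combination h⟩, by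
    rw [mem_SU2_iff, Matrix.det_fin_two_of]
    linear_combination h⟩

lemma m_mk (a b : ℂ) (h : a * (starRingEnd ℂ) a + b * (starRingEnd ℂ) b = 1) :
    m (mk a b h) = !![a, b; -(starRingEnd ℂ) b, (starRingEnd ℂ) a] := rfl

end SU2aux

namespace SU2aux

lemma exists_form (g : SU2) : ∃ a b : ℂ,
    a * (starRingEnd ℂ) a + b * (starRingEnd ℂ) b = 1 ∧
    m g = !![a, b; -(starRingEnd ℂ) b, (starRingEnd ℂ) a] := by
  obtain ⟨⟨M, hM⟩, hdet⟩ := g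
  have hdet' : M.det = 1 := hdet
  have h1 : M * star M = 1 := (Matrix.mem_unitaryGroup_iff).mp hM
  have hinv : M⁻¹ = star M := Matrix.inv_eq_right_inv h1
  have h2 : star M = M.adjugate := by
    rw [← hinv, Matrix.inv_def, hdet']
    simp
  have e11 : M 1 1 = (starRingEnd ℂ) (M 0 0) := by
    have := congrFun (congrFun h2 0) 0
    simp [Matrix.star_apply, Matrix.adjugate_fin_two] at this
    exact this.symm
  have e10 : M 1 0 = -(starRingEnd ℂ) (M 0 1) := by
    have := congrFun (congrFun h2 1) 0
    simp [Matrix.star_apply, Matrix.adjugate_fin_two] at this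
    linear_combination this
  refine ⟨M 0 0, M 0 1, ?_, ?_⟩
  · have := hdet'
    rw [Matrix.det_fin_two, e11, e10] at this
    linear_combination this
  · show M = _
    ext i j
    fin_cases i <;> fin_cases j <;> simp [e11, e10]

lemma mem_conjClass_of (t : ℝ) (y : ℂ) (ht : 0 ≤ t)
    (hn : (t : ℂ) ^ 2 + y * (starRingEnd ℂ) y = 1)
    (g : SU2) (hg : m g = !![Complex.I * t, y; -(starRingEnd ℂ) y, -(Complex.I * t)]) :
    g ∈ conjClass (Real.pi / 2) := by
  set p : ℝ := Real.sqrt ((1 + t) / 2) with hp_def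
  have h1t : (0:ℝ) < (1 + t) / 2 := by linarith
  have hp_pos : 0 < p := Real.sqrt_pos.mpr h1t
  have hp2 : (p : ℂ) ^ 2 = (1 + t) / 2 := by
    have : p ^ 2 = (1 + t) / 2 := Real.sq_sqrt h1t.le
    exact_mod_cast congrArg Complex.ofReal this
  have hpne : (p : ℂ) ≠ 0 := by exact_mod_cast hp_pos.ne'
  set q : ℂ := Complex.I * y / (2 * p) with hq_def
  have hcq : (starRingEnd ℂ) q = -Complex.I * (starRingEnd ℂ) y / (2 * p) := by
    rw [hq_def, map_div₀]
    simp only [_root_.map_mul, map_ofNat, Complex.conj_I, Complex.conj_ofReal]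
  have hmem : (p : ℂ) * (starRingEnd ℂ) (p : ℂ) + q * (starRingEnd ℂ) q = 1 := by
    rw [hcq, hq_def, Complex.conj_ofReal]
    field_simp
    linear_combination (4*(p:ℂ)^2 + 2*(t:ℂ) - 2) * hp2 + hn + (-(y * (starRingEnd ℂ) y)) * Complex.I_sq
  have hmem' : (p:ℂ)^2 + q * (starRingEnd ℂ) q = 1 := by
    rw [← hmem, Complex.conj_ofReal]; ring
  have hq1 : q * (2*(p:ℂ)) = Complex.I * y := by
    rw [hq_def]; field_simp
  have hq2 : (starRingEnd ℂ) q * (2*(p:ℂ)) = -(Complex.I * (starRingEnd ℂ) y) := by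
    rw [hcq]; field_simp
  refine ⟨mk p q hmem, ?_⟩
  apply m_injective
  rw [m_mul, m_mul, m_inv, m_mk, m_su2diag_halfPi, hg]
  ext i j
  fin_cases i <;> fin_cases j
  · simp [Matrix.mul_apply, Fin.sum_univ_two, Matrix.star_apply, Complex.conj_ofReal]
    linear_combination (-Complex.I) * hmem' + (2*Complex.I) * hp2
  · simp [Matrix.mul_apply, Fin.sum_univ_two, Matrix.star_apply, Complex.conj_ofReal]
    linear_combination (-Complex.I) * hq1 + (-y) * Complex.I_sq
  · simp [Matrix.mul_apply, Fin.sum_univ_two, Matrix.star_apply, Complex.conj_ofReal]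
    linear_combination (-Complex.I) * hq2 + ((starRingEnd ℂ) y) * Complex.I_sq
  · simp [Matrix.mul_apply, Fin.sum_univ_two, Matrix.star_apply, Complex.conj_ofReal]
    linear_combination Complex.I * hmem' - (2*Complex.I) * hp2

end SU2aux

/-- `C(π/2)C(π/2) = SU(2)`: every element of `SU(2)` is a product of two
matrices each conjugate in `SU(2)` to `diag(i, −i)`. -/
theorem halfPi_mul_halfPi_eq_univ :
    conjClass (Real.pi / 2) * conjClass (Real.pi / 2) = Set.univ := by
  ext g
  simp only [Set.mem_univ, iff_true]
  rw [Set.mem_mul]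
  obtain ⟨a, b, hab, hform⟩ := SU2aux.exists_form g
  have hcast : b * (starRingEnd ℂ) b = ((‖b‖ : ℝ) : ℂ) ^ 2 := by
    rw [Complex.mul_conj, Complex.normSq_eq_norm_sq]
    push_cast
    ring
  set y0 : ℂ := if b = 0 then 1 else Complex.I * b / (‖b‖) with hy0_def
  have hy0 : y0 * (starRingEnd ℂ) y0 = 1 := by
    rw [hy0_def]
    split_ifs with hb
    · simp
    · have hb' : ((‖b‖ : ℝ) : ℂ) ≠ 0 := by
        simpa using hb
      rw [map_div₀, _root_.map_mul, Complex.conj_I, Complex.conj_ofReal]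
      field_simp
      linear_combination hcast - (b * (starRingEnd ℂ) b) * Complex.I_sq
  have h0 : (0 : ℂ) * (starRingEnd ℂ) 0 + y0 * (starRingEnd ℂ) y0 = 1 := by
    simpa using hy0
  have hk : y0 * (starRingEnd ℂ) b = Complex.I * (‖b‖ : ℝ) := by
    rw [hy0_def]
    split_ifs with hb
    · simp [hb]
    · have hb' : ((‖b‖ : ℝ) : ℂ) ≠ 0 := by
        simpa using hb
      field_simp
      linear_combination hcast
  have hA : SU2aux.mk 0 y0 h0 ∈ conjClass (Real.pi / 2) := by
    apply SU2aux.mem_conjClass_of 0 y0 le_rfl (by simpa using hy0)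
    rw [SU2aux.m_mk]
    ext i j
    fin_cases i <;> fin_cases j <;> simp
  have hmB : SU2aux.m ((SU2aux.mk 0 y0 h0)⁻¹ * g) =
      !![Complex.I * (‖b‖ : ℝ), -(y0 * (starRingEnd ℂ) a);
         -(starRingEnd ℂ) (-(y0 * (starRingEnd ℂ) a)), -(Complex.I * (‖b‖ : ℝ))] := by
    rw [SU2aux.m_mul, SU2aux.m_inv, SU2aux.m_mk, hform]
    have hk' : (starRingEnd ℂ) y0 * b = -(Complex.I * (‖b‖ : ℝ)) := by
      have := congrArg (starRingEnd ℂ) hk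
      simp only [_root_.map_mul, Complex.conj_conj, Complex.conj_I, Complex.conj_ofReal] at this
      linear_combination this
    ext i j
    fin_cases i <;> fin_cases j <;>
      simp [Matrix.mul_apply, Fin.sum_univ_two, Matrix.star_apply, _root_.map_mul,
        Complex.conj_conj]
    · linear_combination hk
    · linear_combination hk'
  have hB : (SU2aux.mk 0 y0 h0)⁻¹ * g ∈ conjClass (Real.pi / 2) := by
    apply SU2aux.mem_conjClass_of (‖b‖) (-(y0 * (starRingEnd ℂ) a))
      (norm_nonneg b) ?_ _ hmB
    simp only [map_neg, _root_.map_mul, Complex.conj_conj]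
    linear_combination hab - hcast + (a * (starRingEnd ℂ) a) * hy0
  exact ⟨_, hA, _, hB, mul_inv_cancel_left _ _⟩
end
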